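/- Let 0 < p < ∞, let ω be a radial weight with ω ∈ D and let μ be a radial weight with μ ∈ D̂. Let k ∈ ℕ, k > 1, be such that there is a constant c > 0 with ∫_r^{1−(1−r)/k} ω(s) ds ≥ c ω̂(r) for all 0 ≤ r < 1. Then there exists a constant C = C(ω, μ, p) > 0 such that ω_{k^n} μ_{k^{n−1}}^p ≤ C (ω μ̂^p)_{k^n} for all n ∈ ℕ, where (ω μ̂^p)_x := ∫_0^1 s^x ω(s) μ̂(s)^p ds. -/

import Mathlib

open MeasureTheory Set Filter
open scoped ENNReal

/-- The tail integral `ω̂(r) = ∫_r^1 ω(s) ds` of a radial weight. -/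
noncomputable def wHat (ω : ℝ → ℝ) (r : ℝ) : ℝ := ∫ s in r..1, ω s

/-- The moment `ω_x = ∫_0^1 s^x ω(s) ds` of a radial weight. -/
noncomputable def wMom (ω : ℝ → ℝ) (x : ℝ) : ℝ := ∫ s in (0:ℝ)..1, s ^ x * ω s

/-- A radial weight: nonnegative, integrable on `[0,1)`, with positive tail integrals. -/
def IsRadialWeight (ω : ℝ → ℝ) : Prop :=
  (∀ s ∈ Set.Ico (0:ℝ) 1, 0 ≤ ω s) ∧
    MeasureTheory.IntegrableOn ω (Set.Ico (0:ℝ) 1) ∧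
    ∀ r ∈ Set.Ico (0:ℝ) 1, 0 < wHat ω r

/-- The class `D̂` of radial weights. -/
def Dhat (ω : ℝ → ℝ) : Prop :=
  ∃ C > (1:ℝ), ∀ r ∈ Set.Ico (0:ℝ) 1, wHat ω r ≤ C * wHat ω ((1 + r) / 2)

/-- The class `Ď` of radial weights. -/
def Dcheck (ω : ℝ → ℝ) : Prop :=
  ∃ k > (1:ℝ), ∃ C > (1:ℝ), ∀ r ∈ Set.Ico (0:ℝ) 1,
    wHat ω r ≥ C * wHat ω (1 - (1 - r) / k)

/-- The class `D = D̂ ∩ Ď`. -/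
def Dclass (ω : ℝ → ℝ) : Prop := Dhat ω ∧ Dcheck ω

/-- The class `M`: `ω_x ≥ C ω_{kx}` for all `x ≥ 1`. -/
def Mclass (ω : ℝ → ℝ) : Prop :=
  ∃ C > (1:ℝ), ∃ k > (1:ℝ), ∀ x : ℝ, 1 ≤ x → wMom ω x ≥ C * wMom ω (k * x)

/-- The fractional derivative `D^μ f(z) = Σ (f̂(n)/μ_{2n+1}) zⁿ` induced by a radial
weight `μ`, acting on the Taylor coefficients `a` of `f`. -/
noncomputable def Dfrac (μ : ℝ → ℝ) (a : ℕ → ℂ) (z : ℂ) : ℂ :=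
  ∑' n : ℕ, (a n / ((wMom μ (2 * (n : ℝ) + 1) : ℝ) : ℂ)) * z ^ n

/-- `∫_𝔻 |f(z)|^p w(|z|) dA(z)` as a Lebesgue integral (up to the normalization `1/π`). -/
noncomputable def discLInt (p : ℝ) (w : ℝ → ℝ) (f : ℂ → ℂ) : ℝ≥0∞ :=
  ∫⁻ z in Metric.ball (0:ℂ) 1, ENNReal.ofReal (‖f z‖ ^ p * w ‖z‖)


section Aux

variable {ω : ℝ → ℝ}

/-- a.e. points of the line differ from 1 -/
lemma ae_ne_one : ∀ᵐ x : ℝ ∂volume, x ≠ 1 := by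
  rw [ae_iff]
  have : {x : ℝ | ¬ x ≠ 1} = {(1:ℝ)} := by ext x; simp
  rw [this]
  simp

lemma rw_nonneg_ae (hω : IsRadialWeight ω) {s : Set ℝ} (hs : MeasurableSet s)
    (hsub : s ⊆ Icc (0:ℝ) 1) :
    ∀ᵐ x ∂(volume.restrict s), 0 ≤ ω x := by
  filter_upwards [ae_restrict_mem hs, ae_restrict_of_ae ae_ne_one] with x hx hx1
  exact hω.1 x ⟨(hsub hx).1, lt_of_le_of_ne (hsub hx).2 hx1⟩

lemma rw_ii (hω : IsRadialWeight ω) {a b : ℝ} (ha : 0 ≤ a) (hab : a ≤ b) (hb : b ≤ 1) :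
    IntervalIntegrable ω volume a b := by
  rw [intervalIntegrable_iff_integrableOn_Ioc_of_le hab,
    integrableOn_Ioc_iff_integrableOn_Ioo]
  exact hω.2.1.mono_set (fun x hx => ⟨ha.trans hx.1.le, lt_of_lt_of_le hx.2 hb⟩)

lemma wHat_eq_add (hω : IsRadialWeight ω) {a b : ℝ} (ha : 0 ≤ a) (hab : a ≤ b) (hb : b ≤ 1) :
    wHat ω a = (∫ s in a..b, ω s) + wHat ω b :=
  (intervalIntegral.integral_add_adjacent_intervals (rw_ii hω ha hab hb)
    (rw_ii hω (ha.trans hab) hb le_rfl)).symm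

lemma rw_int_nonneg (hω : IsRadialWeight ω) {a b : ℝ} (ha : 0 ≤ a) (hab : a ≤ b) (hb : b ≤ 1) :
    0 ≤ ∫ s in a..b, ω s := by
  apply intervalIntegral.integral_nonneg_of_ae_restrict hab
  exact rw_nonneg_ae hω measurableSet_Icc (fun x hx => ⟨ha.trans hx.1, hx.2.trans hb⟩)

lemma wHat_nonneg (hω : IsRadialWeight ω) {r : ℝ} (hr0 : 0 ≤ r) (hr1 : r ≤ 1) :
    0 ≤ wHat ω r :=
  rw_int_nonneg hω hr0 hr1 le_rfl

lemma wHat_anti (hω : IsRadialWeight ω) {a b : ℝ} (ha : 0 ≤ a) (hab : a ≤ b) (hb : b ≤ 1) :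
    wHat ω b ≤ wHat ω a := by
  rw [wHat_eq_add hω ha hab hb]
  linarith [rw_int_nonneg hω ha hab hb]

end Aux

section Step

variable {ω : ℝ → ℝ}

/-- k-step version of the `Dhat` condition. -/
lemma dhat_step (hω : IsRadialWeight ω) (hD : Dhat ω) {κ : ℝ} (hκ : 1 < κ) :
    ∃ A > (1:ℝ), ∀ r ∈ Ico (0:ℝ) 1, wHat ω r ≤ A * wHat ω (1 - (1 - r) / κ) := by
  obtain ⟨C, hC, hCle⟩ := hD
  obtain ⟨m, hm⟩ := pow_unbounded_of_one_lt κ (by norm_num : (1:ℝ) < 2)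
  have hC0 : (0:ℝ) < C := lt_trans one_pos hC
  have hmem : ∀ i : ℕ, ∀ r ∈ Ico (0:ℝ) 1, (1 - (1 - r) / 2 ^ i) ∈ Ico (0:ℝ) 1 := by
    intro i r hr
    obtain ⟨hr0, hr1⟩ := hr
    have h2 : (1:ℝ) ≤ 2 ^ i := one_le_pow₀ (by norm_num)
    have h1r : 0 < 1 - r := by linarith
    constructor
    · have : (1 - r) / 2 ^ i ≤ (1 - r) / 1 := by
        apply div_le_div_of_nonneg_left h1r.le one_pos h2
      simp at this; linarith
    · have : 0 < (1 - r) / 2 ^ i := div_pos h1r (by positivity)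
      linarith
  have iter : ∀ i : ℕ, ∀ r ∈ Ico (0:ℝ) 1, wHat ω r ≤ C ^ i * wHat ω (1 - (1 - r) / 2 ^ i) := by
    intro i
    induction i with
    | zero => intro r hr; simp
    | succ i ih =>
      intro r hr
      have h1 := ih r hr
      have h2 := hCle _ (hmem i r hr)
      have heq : (1 + (1 - (1 - r) / 2 ^ i)) / 2 = 1 - (1 - r) / 2 ^ (i + 1) := by
        rw [pow_succ]; ring
      calc wHat ω r ≤ C ^ i * wHat ω (1 - (1 - r) / 2 ^ i) := h1
        _ ≤ C ^ i * (C * wHat ω ((1 + (1 - (1 - r) / 2 ^ i)) / 2)) := by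
            apply mul_le_mul_of_nonneg_left h2 (by positivity)
        _ = C ^ (i + 1) * wHat ω (1 - (1 - r) / 2 ^ (i + 1)) := by
            rw [heq]; ring
  have hm1 : m ≠ 0 := by
    intro h; rw [h] at hm; simp at hm; linarith
  refine ⟨C ^ m, one_lt_pow₀ hC hm1, fun r hr => ?_⟩
  obtain ⟨hr0, hr1⟩ := hr
  have h1r : 0 < 1 - r := by linarith
  have hκ0 : 0 < κ := lt_trans one_pos hκ
  have hle : 1 - (1 - r) / κ ≤ 1 - (1 - r) / 2 ^ m := by
    have : (1 - r) / 2 ^ m ≤ (1 - r) / κ :=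
      div_le_div_of_nonneg_left h1r.le hκ0 hm.le
    linarith
  have ha0 : 0 ≤ 1 - (1 - r) / κ := by
    have : (1 - r) / κ ≤ (1 - r) / 1 := div_le_div_of_nonneg_left h1r.le one_pos hκ.le
    simp at this; linarith
  have hb1 : 1 - (1 - r) / 2 ^ m ≤ 1 := by
    have : 0 < (1 - r) / 2 ^ m := div_pos h1r (by positivity)
    linarith
  calc wHat ω r ≤ C ^ m * wHat ω (1 - (1 - r) / 2 ^ m) := iter m r ⟨hr0, hr1⟩
    _ ≤ C ^ m * wHat ω (1 - (1 - r) / κ) := by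
        apply mul_le_mul_of_nonneg_left (wHat_anti hω ha0 hle hb1) (by positivity)

end Step

/-- The points `r_j = 1 - q^{-j}`. -/
noncomputable def rpt (q : ℝ) (j : ℕ) : ℝ := 1 - (1 / q) ^ j

section Rpt

variable {ω : ℝ → ℝ} {q : ℝ} (hq : 2 ≤ q)
include hq

omit hq in
lemma rpt_one_sub (j : ℕ) : 1 - rpt q j = (1 / q) ^ j := by simp [rpt]

lemma rpt_mem (j : ℕ) : rpt q j ∈ Ico (0:ℝ) 1 := by
  have hq0 : (0:ℝ) < q := by linarith
  have h1 : (0:ℝ) < (1 / q) ^ j := by positivity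
  have h2 : (1 / q : ℝ) ≤ 1 := by
    rw [div_le_one hq0]; linarith
  have h3 : ((1:ℝ) / q) ^ j ≤ 1 := pow_le_one₀ (by positivity) h2
  refine ⟨by simp only [rpt]; linarith, by simp only [rpt]; linarith⟩

lemma rpt_succ (j : ℕ) : rpt q (j + 1) = 1 - (1 - rpt q j) / q := by
  have hq0 : q ≠ 0 := by intro h; rw [h] at hq; norm_num at hq
  simp only [rpt]
  rw [pow_succ]
  field_simp
  ring

lemma rpt_mono {i j : ℕ} (hij : i ≤ j) : rpt q i ≤ rpt q j := by
  have h2 : (1 / q : ℝ) ≤ 1 := by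
    rw [div_le_one (by linarith)]; linarith
  have := pow_le_pow_of_le_one (by positivity : (0:ℝ) ≤ 1/q) h2 hij
  simp only [rpt]; linarith

lemma rpt_step_iter {A : ℝ} (hA0 : 0 ≤ A)
    (hstep : ∀ r ∈ Ico (0:ℝ) 1, wHat ω r ≤ A * wHat ω (1 - (1 - r) / q)) :
    ∀ i m : ℕ, wHat ω (rpt q i) ≤ A ^ m * wHat ω (rpt q (i + m)) := by
  intro i m
  induction m with
  | zero => simp
  | succ m ih =>
    calc wHat ω (rpt q i) ≤ A ^ m * wHat ω (rpt q (i + m)) := ih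
      _ ≤ A ^ m * (A * wHat ω (1 - (1 - rpt q (i + m)) / q)) := by
          apply mul_le_mul_of_nonneg_left (hstep _ (rpt_mem hq _)) (by positivity)
      _ = A ^ (m + 1) * wHat ω (rpt q (i + (m + 1))) := by
          rw [← rpt_succ hq]; ring_nf

end Rpt

section Mul

variable {ω μ : ℝ → ℝ}

lemma rw_ii_mul (hω : IsRadialWeight ω) {h : ℝ → ℝ} {M : ℝ}
    (hmeas : AEStronglyMeasurable h (volume.restrict (Ioo (0:ℝ) 1)))
    (hbd : ∀ s ∈ Ioo (0:ℝ) 1, |h s| ≤ M)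
    {a b : ℝ} (ha : 0 ≤ a) (hab : a ≤ b) (hb : b ≤ 1) :
    IntervalIntegrable (fun s => h s * ω s) volume a b := by
  rw [intervalIntegrable_iff_integrableOn_Ioc_of_le hab,
    integrableOn_Ioc_iff_integrableOn_Ioo]
  have hsub : Ioo a b ⊆ Ioo (0:ℝ) 1 :=
    fun x hx => ⟨lt_of_le_of_lt ha hx.1, lt_of_lt_of_le hx.2 hb⟩
  have hg : IntegrableOn ω (Ioo a b) :=
    hω.2.1.mono_set (fun x hx => ⟨ha.trans hx.1.le, lt_of_lt_of_le hx.2 hb⟩)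
  apply Integrable.bdd_mul (c := M) hg (hmeas.mono_measure (Measure.restrict_mono hsub le_rfl))
  filter_upwards [ae_restrict_mem measurableSet_Ioo] with x hx
  rw [Real.norm_eq_abs]
  exact hbd x (hsub hx)

lemma wHat_aesm (hμ : IsRadialWeight μ) :
    AEStronglyMeasurable (wHat μ) (volume.restrict (Ioo (0:ℝ) 1)) := by
  have hanti : Antitone (fun s : ℝ => wHat μ (max 0 (min 1 s))) := by
    intro s t hst
    exact wHat_anti hμ (le_max_left _ _)
      (max_le_max le_rfl (min_le_min le_rfl hst))
      (max_le zero_le_one (min_le_left 1 t))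
  apply (hanti.measurable.aestronglyMeasurable).congr
  filter_upwards [ae_restrict_mem measurableSet_Ioo] with x hx
  have : max 0 (min 1 x) = x := by
    rw [min_eq_right hx.2.le, max_eq_right hx.1.le]
  rw [this]

end Mul

lemma sum_bound {A q : ℝ} (hA : 1 < A) (hq : 2 ≤ q) :
    Summable (fun i : ℕ => A ^ (i + 1) * Real.exp (-(q ^ i))) := by
  apply summable_of_ratio_norm_eventually_le (r := 1/2) (by norm_num)
  have h0 : Tendsto (fun i : ℕ => q ^ i * (q - 1)) atTop atTop :=
    (tendsto_pow_atTop_atTop_of_one_lt (by linarith)).atTop_mul_const (by linarith)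
  have h1 : Tendsto (fun i : ℕ => A * Real.exp (-(q ^ i * (q - 1)))) atTop (nhds 0) := by
    have h2 : Tendsto (fun i : ℕ => Real.exp (-(q ^ i * (q - 1)))) atTop (nhds 0) :=
      Real.tendsto_exp_atBot.comp (tendsto_neg_atTop_atBot.comp h0)
    simpa using h2.const_mul A
  filter_upwards [h1.eventually (eventually_le_nhds (by norm_num : (0:ℝ) < 1/2))] with i hi
  have hA0 : (0:ℝ) < A := by linarith
  have hgnn : (0:ℝ) ≤ A ^ (i + 1) * Real.exp (-(q ^ i)) := by positivity
  have hgnn' : (0:ℝ) ≤ A ^ (i + 1 + 1) * Real.exp (-(q ^ (i + 1))) := by positivity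
  rw [Real.norm_eq_abs, Real.norm_eq_abs, abs_of_nonneg hgnn, abs_of_nonneg hgnn']
  have key : A ^ (i + 1 + 1) * Real.exp (-(q ^ (i + 1))) =
      (A * Real.exp (-(q ^ i * (q - 1)))) * (A ^ (i + 1) * Real.exp (-(q ^ i))) := by
    have harg : -(q ^ (i + 1)) = -(q ^ i * (q - 1)) + -(q ^ i) := by
      rw [pow_succ]; ring
    rw [harg, Real.exp_add, pow_succ]
    ring
  rw [key]
  exact mul_le_mul_of_nonneg_right hi hgnn

lemma moment_bound {ω : ℝ → ℝ} (hω : IsRadialWeight ω) {q A : ℝ} (hq : 2 ≤ q) (hA : 1 < A)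
    (hstep : ∀ r ∈ Ico (0:ℝ) 1, wHat ω r ≤ A * wHat ω (1 - (1 - r) / q)) :
    ∃ B > (0:ℝ), ∀ m : ℕ, wMom ω (q ^ m) ≤ B * wHat ω (rpt q m) := by
  have hA0 : (0:ℝ) < A := by linarith
  set g : ℕ → ℝ := fun i => A ^ (i + 1) * Real.exp (-(q ^ i)) with hg
  have hgsum : Summable g := sum_bound hA hq
  have hgnn : ∀ i, 0 ≤ g i := fun i => by positivity
  set T := ∑' i, g i with hT
  have hT0 : 0 ≤ T := tsum_nonneg hgnn
  refine ⟨T + 1, by linarith, fun m => ?_⟩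
  have hK0 : (0:ℝ) < q ^ m := by positivity
  -- integrability of the integrand
  have hFmeas : AEStronglyMeasurable (fun s : ℝ => s ^ (q ^ m))
      (volume.restrict (Ioo (0:ℝ) 1)) :=
    (Real.continuous_rpow_const hK0.le).measurable.aestronglyMeasurable
  have hFbd : ∀ s ∈ Ioo (0:ℝ) 1, |s ^ (q ^ m)| ≤ 1 := by
    intro s hs
    rw [abs_of_nonneg (Real.rpow_nonneg hs.1.le _)]
    exact Real.rpow_le_one hs.1.le hs.2.le hK0.le
  have hFii : ∀ a b : ℝ, 0 ≤ a → a ≤ b → b ≤ 1 →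
      IntervalIntegrable (fun s => s ^ (q ^ m) * ω s) volume a b :=
    fun a b ha hab hb => rw_ii_mul hω hFmeas hFbd ha hab hb
  have hrm := rpt_mem hq m
  have hwnn : 0 ≤ wHat ω (rpt q m) := wHat_nonneg hω hrm.1 hrm.2.le
  -- decomposition
  have hadj : ∀ j, j < m → IntervalIntegrable (fun s => s ^ (q ^ m) * ω s) volume
      (rpt q j) (rpt q (j + 1)) :=
    fun j _ => hFii _ _ (rpt_mem hq j).1 (rpt_mono hq (Nat.le_succ j)) (rpt_mem hq (j + 1)).2.le
  have hsum := intervalIntegral.sum_integral_adjacent_intervals (a := rpt q) (n := m) hadj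
  have hr0 : rpt q 0 = 0 := by simp [rpt]
  have hsplit : wMom ω (q ^ m) =
      (∑ j ∈ Finset.range m, ∫ s in rpt q j..rpt q (j + 1), s ^ (q ^ m) * ω s) +
        ∫ s in rpt q m..(1:ℝ), s ^ (q ^ m) * ω s := by
    rw [hsum, hr0]
    simp only [wMom]
    exact (intervalIntegral.integral_add_adjacent_intervals
      (hFii 0 (rpt q m) le_rfl hrm.1 hrm.2.le)
      (hFii (rpt q m) 1 hrm.1 hrm.2.le le_rfl)).symm
  -- tail bound
  have htail : ∫ s in rpt q m..(1:ℝ), s ^ (q ^ m) * ω s ≤ wHat ω (rpt q m) := by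
    have := intervalIntegral.integral_mono_ae_restrict (μ := volume)
      (f := fun s => s ^ (q ^ m) * ω s) (g := ω) hrm.2.le
      (hFii _ _ hrm.1 hrm.2.le le_rfl) (rw_ii hω hrm.1 hrm.2.le le_rfl) ?_
    · exact this
    · filter_upwards [ae_restrict_mem measurableSet_Icc, ae_restrict_of_ae ae_ne_one]
        with x hx hx1
      have hx0 : (0:ℝ) ≤ x := le_trans hrm.1 hx.1
      have hxlt : x < 1 := lt_of_le_of_ne hx.2 hx1
      calc x ^ (q ^ m) * ω x ≤ 1 * ω x :=
            mul_le_mul_of_nonneg_right (Real.rpow_le_one hx0 hx.2 hK0.le)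
              (hω.1 x ⟨hx0, hxlt⟩)
        _ = ω x := one_mul _
  -- piece bounds
  have hpiece : ∀ j, j < m → ∫ s in rpt q j..rpt q (j + 1), s ^ (q ^ m) * ω s ≤
      g (m - 1 - j) * wHat ω (rpt q m) := by
    intro j hj
    have hj1 : (j:ℕ) + 1 ≤ m := hj
    have hrj := rpt_mem hq j
    have hrj1 := rpt_mem hq (j + 1)
    have hmono : rpt q j ≤ rpt q (j + 1) := rpt_mono hq (Nat.le_succ j)
    have hstep1 : ∫ s in rpt q j..rpt q (j + 1), s ^ (q ^ m) * ω s ≤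
        rpt q (j + 1) ^ (q ^ m) * ∫ s in rpt q j..rpt q (j + 1), ω s := by
      rw [← intervalIntegral.integral_const_mul]
      apply intervalIntegral.integral_mono_on hmono
        (hFii _ _ hrj.1 hmono hrj1.2.le)
        ((rw_ii hω hrj.1 hmono hrj1.2.le).const_mul _)
      intro x hx
      have hx0 : (0:ℝ) ≤ x := le_trans hrj.1 hx.1
      have hxlt : x < 1 := lt_of_le_of_lt hx.2 hrj1.2
      exact mul_le_mul_of_nonneg_right (Real.rpow_le_rpow hx0 hx.2 hK0.le)
        (hω.1 x ⟨hx0, hxlt⟩)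
    have hintnn : 0 ≤ ∫ s in rpt q j..rpt q (j + 1), ω s :=
      rw_int_nonneg hω hrj.1 hmono hrj1.2.le
    have hstep2 : ∫ s in rpt q j..rpt q (j + 1), ω s ≤ wHat ω (rpt q j) := by
      have := wHat_eq_add hω hrj.1 hmono hrj1.2.le
      have hnn := wHat_nonneg hω hrj1.1 hrj1.2.le
      linarith
    have hstep3 : wHat ω (rpt q j) ≤ A ^ (m - j) * wHat ω (rpt q m) := by
      have := rpt_step_iter hq hA0.le hstep j (m - j)
      rwa [Nat.add_sub_cancel' hj.le] at this
    have hstep4 : rpt q (j + 1) ^ (q ^ m) ≤ Real.exp (-(q ^ (m - 1 - j))) := by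
      set t : ℝ := (1 / q) ^ (j + 1) with ht
      have htrpt : rpt q (j + 1) = 1 - t := rfl
      have h1t : 1 - t ≤ Real.exp (-t) := by
        have := Real.add_one_le_exp (-t)
        linarith
      have h1 : rpt q (j + 1) ^ (q ^ m) ≤ Real.exp (-t) ^ (q ^ m) := by
        rw [htrpt]
        exact Real.rpow_le_rpow (by rw [← htrpt]; exact hrj1.1) h1t hK0.le
      have h2 : Real.exp (-t) ^ (q ^ m) = Real.exp (-t * q ^ m) := by
        rw [Real.rpow_def_of_pos (Real.exp_pos _), Real.log_exp]
      have h3 : -t * q ^ m = -(q ^ (m - 1 - j)) := by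
        have hsub : m - 1 - j = m - (j + 1) := by omega
        have hq0 : q ≠ 0 := by intro h; rw [h] at hq; norm_num at hq
        rw [hsub, pow_sub₀ q hq0 hj1, ht]
        field_simp
        rw [← mul_pow, one_div, inv_mul_cancel₀ hq0, one_pow]
      rw [h3] at h2
      rw [h2] at h1
      exact h1
    have hgval : g (m - 1 - j) = A ^ (m - j) * Real.exp (-(q ^ (m - 1 - j))) := by
      have hmj : m - 1 - j + 1 = m - j := by omega
      rw [hg]; simp only []; rw [hmj]
    calc ∫ s in rpt q j..rpt q (j + 1), s ^ (q ^ m) * ω s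
        ≤ rpt q (j + 1) ^ (q ^ m) * ∫ s in rpt q j..rpt q (j + 1), ω s := hstep1
      _ ≤ Real.exp (-(q ^ (m - 1 - j))) * (A ^ (m - j) * wHat ω (rpt q m)) :=
          mul_le_mul hstep4 (hstep2.trans hstep3) hintnn (Real.exp_pos _).le
      _ = g (m - 1 - j) * wHat ω (rpt q m) := by rw [hgval]; ring
  -- assemble
  have hsumle : (∑ j ∈ Finset.range m, g (m - 1 - j)) ≤ T := by
    rw [Finset.sum_range_reflect g m]
    exact Summable.sum_le_tsum (Finset.range m) (fun i _ => hgnn i) hgsum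
  calc wMom ω (q ^ m) = _ := hsplit
    _ ≤ (∑ j ∈ Finset.range m, g (m - 1 - j) * wHat ω (rpt q m)) + wHat ω (rpt q m) :=
        add_le_add (Finset.sum_le_sum (fun j hj => hpiece j (Finset.mem_range.mp hj))) htail
    _ = ((∑ j ∈ Finset.range m, g (m - 1 - j)) + 1) * wHat ω (rpt q m) := by
        rw [← Finset.sum_mul]; ring
    _ ≤ (T + 1) * wHat ω (rpt q m) := by
        apply mul_le_mul_of_nonneg_right _ hwnn
        linarith

lemma wMom_nonneg {ω : ℝ → ℝ} (hω : IsRadialWeight ω) (x : ℝ) : 0 ≤ wMom ω x := by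
  apply intervalIntegral.integral_nonneg_of_ae_restrict zero_le_one
  filter_upwards [ae_restrict_mem measurableSet_Icc, ae_restrict_of_ae ae_ne_one]
    with s hs hs1
  exact mul_nonneg (Real.rpow_nonneg hs.1 x) (hω.1 s ⟨hs.1, lt_of_le_of_ne hs.2 hs1⟩)

lemma exp_neg_two_mul_le {t : ℝ} (ht0 : 0 ≤ t) (ht : t ≤ 1/2) :
    Real.exp (-(2 * t)) ≤ 1 - t := by
  have hE0 : (0:ℝ) < Real.exp (2 * t) := Real.exp_pos _
  have hE : 1 + 2 * t ≤ Real.exp (2 * t) := by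
    have := Real.add_one_le_exp (2 * t); linarith
  have hkey : 1 ≤ (1 - t) * Real.exp (2 * t) := by nlinarith
  rw [Real.exp_neg, inv_eq_one_div, div_le_iff₀ hE0]
  linarith

/-- **Moment inequality.** Let `0 < p < ∞`, `ω ∈ D`, `μ ∈ D̂`, and let `k > 1` be such
that `∫_r^{1-(1-r)/k} ω ≥ c ω̂(r)` for all `0 ≤ r < 1`.  Then there is
`C = C(ω,μ,p) > 0` with `ω_{kⁿ} μ_{k^{n-1}}^p ≤ C (ω μ̂^p)_{kⁿ}` for all `n ∈ ℕ`. -/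
theorem moment_product_estimate (p : ℝ) (hp : 0 < p) (ω μ : ℝ → ℝ)
    (hω : IsRadialWeight ω) (hωD : Dclass ω) (hμ : IsRadialWeight μ) (hμD : Dhat μ)
    (k : ℕ) (hk : 1 < k) (c : ℝ) (hc : 0 < c)
    (hkc : ∀ r ∈ Set.Ico (0:ℝ) 1, (∫ s in r..(1 - (1 - r) / k), ω s) ≥ c * wHat ω r) :
    ∃ C > (0:ℝ), ∀ n : ℕ, 1 ≤ n →
      wMom ω ((k : ℝ) ^ n) * wMom μ ((k : ℝ) ^ (n - 1)) ^ p ≤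
        C * wMom (fun s => ω s * wHat μ s ^ p) ((k : ℝ) ^ n) := by
  have hq : (2:ℝ) ≤ (k:ℝ) := by exact_mod_cast hk
  have hq1 : (1:ℝ) < (k:ℝ) := by linarith
  obtain ⟨Aω, hAω, hstepω⟩ := dhat_step hω hωD.1 hq1
  obtain ⟨Aμ, hAμ, hstepμ⟩ := dhat_step hμ hμD hq1
  obtain ⟨Bω, hBω, hBωle⟩ := moment_bound hω hq hAω hstepω
  obtain ⟨Bμ, hBμ, hBμle⟩ := moment_bound hμ hq hAμ hstepμ
  have hBA : (0:ℝ) < Bμ * Aμ ^ 2 := by positivity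
  have hDpos : (0:ℝ) < Bω * (Bμ * Aμ ^ 2) ^ p := by
    have := Real.rpow_pos_of_pos hBA p
    positivity
  have hcE : (0:ℝ) < c * Real.exp (-2) := by positivity
  refine ⟨Bω * (Bμ * Aμ ^ 2) ^ p / (c * Real.exp (-2)), by positivity, fun n hn => ?_⟩
  have hK0 : (0:ℝ) < ((k:ℝ)) ^ n := by positivity
  have hrn := rpt_mem hq n
  have hrn1 := rpt_mem hq (n + 1)
  have hmono : rpt (k:ℝ) n ≤ rpt (k:ℝ) (n + 1) := rpt_mono hq (Nat.le_succ n)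
  have hwωnn : 0 ≤ wHat ω (rpt (k:ℝ) n) := wHat_nonneg hω hrn.1 hrn.2.le
  have hwμnn : 0 ≤ wHat μ (rpt (k:ℝ) (n + 1)) := wHat_nonneg hμ hrn1.1 hrn1.2.le
  -- LHS bound
  have h1 : wMom ω ((k:ℝ) ^ n) ≤ Bω * wHat ω (rpt (k:ℝ) n) := hBωle n
  have h3 : wHat μ (rpt (k:ℝ) (n - 1)) ≤ Aμ ^ 2 * wHat μ (rpt (k:ℝ) (n + 1)) := by
    have := rpt_step_iter hq (by linarith : (0:ℝ) ≤ Aμ) hstepμ (n - 1) 2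
    have hnn : n - 1 + 2 = n + 1 := by omega
    rwa [hnn] at this
  have h4 : wMom μ ((k:ℝ) ^ (n - 1)) ≤ Bμ * (Aμ ^ 2 * wHat μ (rpt (k:ℝ) (n + 1))) :=
    (hBμle (n - 1)).trans (mul_le_mul_of_nonneg_left h3 hBμ.le)
  have h5 : wMom μ ((k:ℝ) ^ (n - 1)) ^ p ≤
      (Bμ * Aμ ^ 2) ^ p * wHat μ (rpt (k:ℝ) (n + 1)) ^ p := by
    calc wMom μ ((k:ℝ) ^ (n - 1)) ^ p
        ≤ ((Bμ * Aμ ^ 2) * wHat μ (rpt (k:ℝ) (n + 1))) ^ p := by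
          apply Real.rpow_le_rpow (wMom_nonneg hμ _) _ hp.le
          rw [mul_assoc]; exact h4
      _ = (Bμ * Aμ ^ 2) ^ p * wHat μ (rpt (k:ℝ) (n + 1)) ^ p :=
          Real.mul_rpow hBA.le hwμnn
  have hLHS : wMom ω ((k:ℝ) ^ n) * wMom μ ((k:ℝ) ^ (n - 1)) ^ p ≤
      (Bω * (Bμ * Aμ ^ 2) ^ p) *
        (wHat ω (rpt (k:ℝ) n) * wHat μ (rpt (k:ℝ) (n + 1)) ^ p) := by
    have hmm := mul_le_mul h1 h5 (Real.rpow_nonneg (wMom_nonneg hμ _) p)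
      (by positivity)
    calc wMom ω ((k:ℝ) ^ n) * wMom μ ((k:ℝ) ^ (n - 1)) ^ p
        ≤ (Bω * wHat ω (rpt (k:ℝ) n)) *
            ((Bμ * Aμ ^ 2) ^ p * wHat μ (rpt (k:ℝ) (n + 1)) ^ p) := hmm
      _ = (Bω * (Bμ * Aμ ^ 2) ^ p) *
            (wHat ω (rpt (k:ℝ) n) * wHat μ (rpt (k:ℝ) (n + 1)) ^ p) := by ring
  -- integrability of the big integrand
  have hmeas : AEStronglyMeasurable
      (fun s : ℝ => s ^ ((k:ℝ) ^ n) * wHat μ s ^ p) (volume.restrict (Ioo (0:ℝ) 1)) := by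
    apply AEStronglyMeasurable.mul
    · exact (Real.continuous_rpow_const hK0.le).measurable.aestronglyMeasurable
    · exact (Real.continuous_rpow_const hp.le).comp_aestronglyMeasurable (wHat_aesm hμ)
  have hbd : ∀ s ∈ Ioo (0:ℝ) 1,
      |s ^ ((k:ℝ) ^ n) * wHat μ s ^ p| ≤ wHat μ 0 ^ p := by
    intro s hs
    have hs0 : (0:ℝ) ≤ s := hs.1.le
    have hμs : 0 ≤ wHat μ s := wHat_nonneg hμ hs0 hs.2.le
    rw [abs_of_nonneg (mul_nonneg (Real.rpow_nonneg hs0 _) (Real.rpow_nonneg hμs p))]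
    calc s ^ ((k:ℝ) ^ n) * wHat μ s ^ p ≤ 1 * wHat μ 0 ^ p := by
          apply mul_le_mul (Real.rpow_le_one hs0 hs.2.le hK0.le)
            (Real.rpow_le_rpow hμs (wHat_anti hμ le_rfl hs0 hs.2.le) hp.le)
            (Real.rpow_nonneg hμs p) zero_le_one
      _ = wHat μ 0 ^ p := one_mul _
  have hGii : ∀ a b : ℝ, 0 ≤ a → a ≤ b → b ≤ 1 →
      IntervalIntegrable (fun s => (s ^ ((k:ℝ) ^ n) * wHat μ s ^ p) * ω s) volume a b :=
    fun a b ha hab hb => rw_ii_mul hω hmeas hbd ha hab hb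
  -- nonneg of pieces
  have houter : ∀ a b : ℝ, 0 ≤ a → a ≤ b → b ≤ 1 →
      0 ≤ ∫ s in a..b, (s ^ ((k:ℝ) ^ n) * wHat μ s ^ p) * ω s := by
    intro a b ha hab hb
    apply intervalIntegral.integral_nonneg_of_ae_restrict hab
    filter_upwards [ae_restrict_mem measurableSet_Icc, ae_restrict_of_ae ae_ne_one]
      with x hx hx1
    have hx0 : (0:ℝ) ≤ x := ha.trans hx.1
    have hx2 : x ≤ 1 := hx.2.trans hb
    exact mul_nonneg (mul_nonneg (Real.rpow_nonneg hx0 _)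
      (Real.rpow_nonneg (wHat_nonneg hμ hx0 hx2) p))
      (hω.1 x ⟨hx0, lt_of_le_of_ne hx2 hx1⟩)
  -- identify wMom with the 0..1 integral of the reordered integrand
  have hwm : wMom (fun s => ω s * wHat μ s ^ p) ((k:ℝ) ^ n) =
      ∫ s in (0:ℝ)..1, (s ^ ((k:ℝ) ^ n) * wHat μ s ^ p) * ω s := by
    simp only [wMom]
    apply intervalIntegral.integral_congr
    intro x _
    ring
  -- split
  have e1 : (∫ s in rpt (k:ℝ) n..rpt (k:ℝ) (n + 1),
        (s ^ ((k:ℝ) ^ n) * wHat μ s ^ p) * ω s) +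
      (∫ s in rpt (k:ℝ) (n + 1)..(1:ℝ), (s ^ ((k:ℝ) ^ n) * wHat μ s ^ p) * ω s) =
      ∫ s in rpt (k:ℝ) n..(1:ℝ), (s ^ ((k:ℝ) ^ n) * wHat μ s ^ p) * ω s :=
    intervalIntegral.integral_add_adjacent_intervals
      (hGii _ _ hrn.1 hmono hrn1.2.le) (hGii _ _ hrn1.1 hrn1.2.le le_rfl)
  have e2 : (∫ s in (0:ℝ)..rpt (k:ℝ) n, (s ^ ((k:ℝ) ^ n) * wHat μ s ^ p) * ω s) +
      (∫ s in rpt (k:ℝ) n..(1:ℝ), (s ^ ((k:ℝ) ^ n) * wHat μ s ^ p) * ω s) =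
      ∫ s in (0:ℝ)..(1:ℝ), (s ^ ((k:ℝ) ^ n) * wHat μ s ^ p) * ω s :=
    intervalIntegral.integral_add_adjacent_intervals
      (hGii _ _ le_rfl hrn.1 hrn.2.le) (hGii _ _ hrn.1 hrn.2.le le_rfl)
  -- middle piece lower bound
  have hmid : (Real.exp (-2) * wHat μ (rpt (k:ℝ) (n + 1)) ^ p) *
        (c * wHat ω (rpt (k:ℝ) n)) ≤
      ∫ s in rpt (k:ℝ) n..rpt (k:ℝ) (n + 1), (s ^ ((k:ℝ) ^ n) * wHat μ s ^ p) * ω s := by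
    have hconstnn : 0 ≤ Real.exp (-2) * wHat μ (rpt (k:ℝ) (n + 1)) ^ p :=
      mul_nonneg (Real.exp_pos _).le (Real.rpow_nonneg hwμnn p)
    have hptwise : ∀ x ∈ Icc (rpt (k:ℝ) n) (rpt (k:ℝ) (n + 1)),
        (Real.exp (-2) * wHat μ (rpt (k:ℝ) (n + 1)) ^ p) * ω x ≤
          (x ^ ((k:ℝ) ^ n) * wHat μ x ^ p) * ω x := by
      intro x hx
      have hx0 : (0:ℝ) ≤ x := hrn.1.trans hx.1
      have hxlt : x < 1 := lt_of_le_of_lt hx.2 hrn1.2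
      have hωx : 0 ≤ ω x := hω.1 x ⟨hx0, hxlt⟩
      have htK : ((1:ℝ) / (k:ℝ)) ^ n * ((k:ℝ)) ^ n = 1 := by
        rw [one_div, inv_pow, inv_mul_cancel₀ (ne_of_gt hK0)]
      have ht0 : (0:ℝ) ≤ ((1:ℝ) / (k:ℝ)) ^ n := by positivity
      have hthalf : ((1:ℝ) / (k:ℝ)) ^ n ≤ 1 / 2 := by
        have ha : ((1:ℝ) / (k:ℝ)) ≤ 1 / 2 :=
          div_le_div_of_nonneg_left one_pos.le two_pos hq
        calc ((1:ℝ) / (k:ℝ)) ^ n ≤ ((1:ℝ) / 2) ^ n := pow_le_pow_left₀ (by positivity : (0:ℝ) ≤ 1/(k:ℝ)) ha n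
          _ ≤ ((1:ℝ) / 2) ^ 1 := pow_le_pow_of_le_one (by norm_num) (by norm_num) hn
          _ = 1 / 2 := pow_one _
      have hexp : Real.exp (-(2 * ((1:ℝ) / (k:ℝ)) ^ n)) ≤ 1 - ((1:ℝ) / (k:ℝ)) ^ n :=
        exp_neg_two_mul_le ht0 hthalf
      have hrpteq : rpt (k:ℝ) n = 1 - ((1:ℝ) / (k:ℝ)) ^ n := rfl
      have he1 : Real.exp (-2) ≤ x ^ ((k:ℝ) ^ n) := by
        have hxge : 1 - ((1:ℝ) / (k:ℝ)) ^ n ≤ x := by rw [← hrpteq]; exact hx.1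
        calc Real.exp (-2)
            = Real.exp (-(2 * ((1:ℝ) / (k:ℝ)) ^ n)) ^ ((k:ℝ) ^ n) := by
              rw [Real.rpow_def_of_pos (Real.exp_pos _), Real.log_exp]
              congr 1
              linear_combination (2:ℝ) * htK
          _ ≤ x ^ ((k:ℝ) ^ n) :=
              Real.rpow_le_rpow (Real.exp_pos _).le (hexp.trans hxge) hK0.le
      have he2 : wHat μ (rpt (k:ℝ) (n + 1)) ^ p ≤ wHat μ x ^ p :=
        Real.rpow_le_rpow hwμnn (wHat_anti hμ hx0 hx.2 hrn1.2.le) hp.le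
      exact mul_le_mul_of_nonneg_right
        (mul_le_mul he1 he2 (Real.rpow_nonneg hwμnn p) (Real.rpow_nonneg hx0 _)) hωx
    calc (Real.exp (-2) * wHat μ (rpt (k:ℝ) (n + 1)) ^ p) * (c * wHat ω (rpt (k:ℝ) n))
        ≤ (Real.exp (-2) * wHat μ (rpt (k:ℝ) (n + 1)) ^ p) *
            ∫ s in rpt (k:ℝ) n..rpt (k:ℝ) (n + 1), ω s := by
          apply mul_le_mul_of_nonneg_left _ hconstnn
          have hh := hkc (rpt (k:ℝ) n) ⟨hrn.1, hrn.2⟩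
          rwa [← rpt_succ hq] at hh
      _ ≤ ∫ s in rpt (k:ℝ) n..rpt (k:ℝ) (n + 1), (s ^ ((k:ℝ) ^ n) * wHat μ s ^ p) * ω s := by
          rw [← intervalIntegral.integral_const_mul]
          exact intervalIntegral.integral_mono_on hmono
            ((rw_ii hω hrn.1 hmono hrn1.2.le).const_mul _)
            (hGii _ _ hrn.1 hmono hrn1.2.le) hptwise
  -- RHS lower bound
  have hRHS : (c * Real.exp (-2)) *
      (wHat ω (rpt (k:ℝ) n) * wHat μ (rpt (k:ℝ) (n + 1)) ^ p) ≤
      wMom (fun s => ω s * wHat μ s ^ p) ((k:ℝ) ^ n) := by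
    rw [hwm]
    have h01 := houter 0 (rpt (k:ℝ) n) le_rfl hrn.1 hrn.2.le
    have h02 := houter (rpt (k:ℝ) (n + 1)) 1 hrn1.1 hrn1.2.le le_rfl
    have hring : (c * Real.exp (-2)) *
        (wHat ω (rpt (k:ℝ) n) * wHat μ (rpt (k:ℝ) (n + 1)) ^ p) =
        (Real.exp (-2) * wHat μ (rpt (k:ℝ) (n + 1)) ^ p) *
          (c * wHat ω (rpt (k:ℝ) n)) := by ring
    linarith [hmid, h01, h02, e1, e2]
  -- conclude
  calc wMom ω ((k:ℝ) ^ n) * wMom μ ((k:ℝ) ^ (n - 1)) ^ p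
      ≤ (Bω * (Bμ * Aμ ^ 2) ^ p) *
          (wHat ω (rpt (k:ℝ) n) * wHat μ (rpt (k:ℝ) (n + 1)) ^ p) := hLHS
    _ = (Bω * (Bμ * Aμ ^ 2) ^ p / (c * Real.exp (-2))) *
          ((c * Real.exp (-2)) *
            (wHat ω (rpt (k:ℝ) n) * wHat μ (rpt (k:ℝ) (n + 1)) ^ p)) := by
        field_simp
    _ ≤ (Bω * (Bμ * Aμ ^ 2) ^ p / (c * Real.exp (-2))) *
          wMom (fun s => ω s * wHat μ s ^ p) ((k:ℝ) ^ n) := by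
        apply mul_le_mul_of_nonneg_left hRHS (by positivity)
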